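/- For a diagonalizable matrix written as A = S N S^{−1} with S positive semidefinite invertible and N normal, the matrix Φ(A) := S^{−1} N S is well defined (independent of the chosen decomposition): if S₁ N₁ S₁^{−1} = S₂ N₂ S₂^{−1} with S₁, S₂ positive definite and N₁, N₂ normal, then S₁^{−1} N₁ S₁ = S₂^{−1} N₂ S₂. -/

import Mathlib

open Matrix
open scoped ComplexOrder

open scoped Matrix.Norms.L2Operator in
noncomputable instance matCStarAux (n : ℕ) : CStarAlgebra (Matrix (Fin n) (Fin n) ℂ) :=
  Matrix.instCStarAlgebra

/-- Conjugation by a unit as an algebra homomorphism. -/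
noncomputable def conjAlgHomAux {A : Type*} [Ring A] [Algebra ℂ A] (u : Aˣ) : A →ₐ[ℂ] A where
  toFun x := u * x * ↑u⁻¹
  map_one' := by simp
  map_mul' x y := by
    calc (u : A) * (x * y) * ↑u⁻¹
        = ↑u * x * (↑u⁻¹ * ↑u) * y * ↑u⁻¹ := by rw [u.inv_mul]; noncomm_ring
      _ = (↑u * x * ↑u⁻¹) * (↑u * y * ↑u⁻¹) := by noncomm_ring
  map_zero' := by simp
  map_add' x y := by noncomm_ring
  commutes' r := by
    simp [Algebra.algebraMap_eq_smul_one, mul_smul_comm, smul_mul_assoc]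

lemma keyAux {n : ℕ} (S N : Matrix (Fin n) (Fin n) ℂ) (hS : S.PosDef)
    (hN : Nᴴ * N = N * Nᴴ) (q : Polynomial ℂ)
    (hq : ∀ z ∈ spectrum ℂ (S * N * S⁻¹), q.eval z = starRingEnd ℂ z) :
    S * Nᴴ * S⁻¹ = Polynomial.aeval (S * N * S⁻¹) q := by
  haveI : IsStarNormal N := ⟨hN⟩
  obtain ⟨u, hu⟩ := hS.isUnit
  have hui : (↑u⁻¹ : Matrix (Fin n) (Fin n) ℂ) = S⁻¹ := by
    rw [Matrix.coe_units_inv, hu]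
  have hspec : spectrum ℂ (S * N * S⁻¹) = spectrum ℂ N := by
    rw [← hui, ← hu]; exact spectrum.units_conjugate
  have hNstar : Nᴴ = Polynomial.aeval N q := by
    have h1 : cfc (fun z : ℂ => q.eval z) N = Polynomial.aeval N q :=
      cfc_polynomial q N
    have h2 : cfc (fun z : ℂ => q.eval z) N = cfc (fun z : ℂ => star z) N := by
      apply cfc_congr
      intro z hz
      exact hq z (hspec ▸ hz)
    have h3 : cfc (fun z : ℂ => star z) N = star N := by
      have := cfc_star (id : ℂ → ℂ) N
      simpa [cfc_id ℂ N] using this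
    exact (h3.symm.trans h2.symm).trans h1
  have := Polynomial.aeval_algHom_apply (conjAlgHomAux u) N q
  simp only [conjAlgHomAux, AlgHom.coe_mk, RingHom.coe_mk, MonoidHom.coe_mk, OneHom.coe_mk,
    hu, hui] at this
  rw [hNstar, ← this]

theorem stmt10_aux {n : ℕ} (S₁ S₂ N₁ N₂ : Matrix (Fin n) (Fin n) ℂ)
    (hS₁ : S₁.PosDef) (hS₂ : S₂.PosDef)
    (hN₁ : N₁ᴴ * N₁ = N₁ * N₁ᴴ) (hN₂ : N₂ᴴ * N₂ = N₂ * N₂ᴴ)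
    (heq : S₁ * N₁ * S₁⁻¹ = S₂ * N₂ * S₂⁻¹) :
    S₁ * N₁ᴴ * S₁⁻¹ = S₂ * N₂ᴴ * S₂⁻¹ := by
  set A := S₁ * N₁ * S₁⁻¹ with hA
  have hfin : (spectrum ℂ A).Finite := A.finite_spectrum
  set s := hfin.toFinset with hs
  set q := Lagrange.interpolate s id (fun z => starRingEnd ℂ z) with hqdef
  have hq : ∀ z ∈ spectrum ℂ A, q.eval z = starRingEnd ℂ z := by
    intro z hz
    have hzs : z ∈ s := hfin.mem_toFinset.mpr hz
    have := Lagrange.eval_interpolate_at_node (fun z => starRingEnd ℂ z)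
      (Set.injOn_id _) hzs
    simpa [hqdef] using this
  have h1 := keyAux S₁ N₁ hS₁ hN₁ q hq
  have h2 := keyAux S₂ N₂ hS₂ hN₂ q (by rw [← heq]; exact hq)
  rw [← heq] at h2
  rw [h1, h2]

/-- The map `Φ(S N S⁻¹) := S⁻¹ N S` (with `S` positive definite and `N` normal) is
well defined: it does not depend on the chosen decomposition. -/
theorem stmt10 (n : ℕ) (S₁ S₂ N₁ N₂ : Matrix (Fin n) (Fin n) ℂ)
    (hS₁ : S₁.PosDef) (hS₂ : S₂.PosDef)
    (hN₁ : N₁ᴴ * N₁ = N₁ * N₁ᴴ) (hN₂ : N₂ᴴ * N₂ = N₂ * N₂ᴴ)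
    (heq : S₁ * N₁ * S₁⁻¹ = S₂ * N₂ * S₂⁻¹) :
    S₁⁻¹ * N₁ * S₁ = S₂⁻¹ * N₂ * S₂ := by
  have h := stmt10_aux S₁ S₂ N₁ N₂ hS₁ hS₂ hN₁ hN₂ heq
  have hct := congrArg conjTranspose h
  have e : ∀ (S N : Matrix (Fin n) (Fin n) ℂ), S.IsHermitian →
      (S * Nᴴ * S⁻¹)ᴴ = S⁻¹ * N * S := by
    intro S N hS
    rw [Matrix.conjTranspose_mul, Matrix.conjTranspose_mul,
      Matrix.conjTranspose_nonsing_inv, hS.eq, Matrix.conjTranspose_conjTranspose,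
      mul_assoc]
  rw [e S₁ N₁ hS₁.1, e S₂ N₂ hS₂.1] at hct
  exact hct
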